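/- Let ν ≥ 1 and let M : [−π, π] → ℝ be continuous with M(ω) < 0 for all ω. Define φ(ω) := (e^{iω}, e^{i2ω}, …, e^{iνω}) ∈ ℂ^ν, τ₀ := (1/2π)∫_{−π}^{π} M(ω) dω, τ₁ := (1/2π)∫_{−π}^{π} M(ω)φ(ω) dω ∈ ℂ^ν, and τ₂ := (1/2π)∫_{−π}^{π} M(ω)φ(ω)φ(ω)ᴴ dω (a Hermitian ν×ν matrix). Then: (i) τ₂ is negative definite and τ₁ᴴτ₂⁻¹τ₁ − τ₀ > 0; (ii) setting u₀* := (τ₁ᴴτ₂⁻¹τ₁ − τ₀)^{−1/2} and û* := −u₀* τ₁ᴴτ₂⁻¹ ∈ ℂ^ν, the function J(u₀, û) := 1 + 2 log u₀ + (1/2π)∫_{−π}^{π} M(ω) |u₀ + Σ_{k=1}^{ν} û_k e^{ikω}|² dω satisfies J(u₀, û) ≤ J(u₀*, û*) = 2 log u₀* for all u₀ > 0 and û ∈ ℂ^ν. -/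

import Mathlib

open Matrix
open scoped ComplexOrder


open Matrix intervalIntegral
open scoped ComplexOrder Real

set_option maxHeartbeats 1000000
namespace GMIAux

/-- Oscillation integral: `∫_{-π}^{π} e^{imω} dω = 0` for nonzero integer `m`. -/
lemma integral_exp_int (m : ℤ) (hm : (m : ℂ) ≠ 0) :
    (∫ ω in (-Real.pi)..Real.pi, Complex.exp (Complex.I * (m : ℂ) * ω)) = 0 := by
  have h := integral_exp_mul_complex (a := -Real.pi) (b := Real.pi)
    (c := Complex.I * (m : ℂ)) (by simpa using hm)
  rw [h]
  have key : ∀ x : ℂ, Complex.exp (Complex.I * (m:ℂ) * x) =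
      Complex.cos ((m:ℂ) * x) + Complex.sin ((m:ℂ) * x) * Complex.I := by
    intro x
    rw [← Complex.exp_mul_I]; ring_nf
  rw [key, key]
  have h1 : Complex.sin ((m:ℂ) * (Real.pi : ℂ)) = 0 := Complex.sin_int_mul_pi m
  have h2 : Complex.sin ((m:ℂ) * ((-Real.pi : ℝ) : ℂ)) = 0 := by
    have : ((m:ℂ) * ((-Real.pi : ℝ) : ℂ)) = -((m:ℂ) * (Real.pi : ℂ)) := by push_cast; ring
    rw [this, Complex.sin_neg, h1, neg_zero]
  have h3 : Complex.cos ((m:ℂ) * ((-Real.pi : ℝ) : ℂ)) = Complex.cos ((m:ℂ) * (Real.pi:ℂ)) := by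
    have : ((m:ℂ) * ((-Real.pi : ℝ) : ℂ)) = -((m:ℂ) * (Real.pi : ℂ)) := by push_cast; ring
    rw [this, Complex.cos_neg]
  rw [h1, h2, h3]
  ring


variable {ν : ℕ}


lemma intInt_sum {ι : Type*} [Fintype ι] {a b : ℝ} (f : ι → ℝ → ℂ)
    (h : ∀ i, IntervalIntegrable (f i) MeasureTheory.volume a b) :
    IntervalIntegrable (fun ω => ∑ i, f i ω) MeasureTheory.volume a b := by
  have h2 := IntervalIntegrable.sum (f := f) Finset.univ (fun i _ => h i)
  rwa [show (∑ i, f i) = fun ω => ∑ i, f i ω from funext fun ω => by simp] at h2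

lemma expand (φ : ℝ → Fin ν → ℂ)
    (hφc : ∀ k, Continuous fun ω => φ ω k)
    (W : ℝ → ℂ) (hW : ContinuousOn W (Set.Icc (-Real.pi) Real.pi))
    (u₀ : ℝ) (uh : Fin ν → ℂ) :
    (∫ ω in (-Real.pi)..Real.pi,
        W ω * (((u₀:ℂ) + ∑ k, uh k * φ ω k) * star ((u₀:ℂ) + ∑ k, uh k * φ ω k)))
    = (u₀:ℂ)^2 * (∫ ω in (-Real.pi)..Real.pi, W ω)
      + (u₀:ℂ) * (∑ k, uh k * (∫ ω in (-Real.pi)..Real.pi, W ω * φ ω k))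
      + (u₀:ℂ) * (∑ l, star (uh l) * (∫ ω in (-Real.pi)..Real.pi, W ω * star (φ ω l)))
      + (∑ k, ∑ l, uh k * star (uh l) *
          (∫ ω in (-Real.pi)..Real.pi, W ω * φ ω k * star (φ ω l))) := by
  have hpi : -Real.pi ≤ Real.pi := by linarith [Real.pi_pos]
  have huIcc : Set.uIcc (-Real.pi) Real.pi = Set.Icc (-Real.pi) Real.pi := Set.uIcc_of_le hpi
  have hInt : ∀ g : ℝ → ℂ, Continuous g →
      IntervalIntegrable (fun ω => W ω * g ω) MeasureTheory.volume (-Real.pi) Real.pi := by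
    intro g hg
    apply ContinuousOn.intervalIntegrable
    rw [huIcc]
    exact hW.mul hg.continuousOn
  have hIntW : IntervalIntegrable W MeasureTheory.volume (-Real.pi) Real.pi := by
    simpa using hInt (fun _ => 1) continuous_const
  have hT2 : ∀ k : Fin ν, IntervalIntegrable (fun ω => uh k * (W ω * φ ω k))
      MeasureTheory.volume (-Real.pi) Real.pi := fun k => (hInt _ (hφc k)).const_mul _
  have hT3 : ∀ l : Fin ν, IntervalIntegrable (fun ω => star (uh l) * (W ω * star (φ ω l)))
      MeasureTheory.volume (-Real.pi) Real.pi := fun l => (hInt _ (hφc l).star).const_mul _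
  have hT4 : ∀ k l : Fin ν, IntervalIntegrable
      (fun ω => uh k * star (uh l) * (W ω * φ ω k * star (φ ω l)))
      MeasureTheory.volume (-Real.pi) Real.pi := by
    intro k l
    have := (hInt (fun ω => φ ω k * star (φ ω l)) ((hφc k).mul (hφc l).star)).const_mul
      (uh k * star (uh l))
    simpa [mul_assoc] using this
  have hpt : ∀ ω : ℝ,
      W ω * (((u₀:ℂ) + ∑ k, uh k * φ ω k) * star ((u₀:ℂ) + ∑ k, uh k * φ ω k))
      = (u₀:ℂ)^2 * W ω
        + ((∑ k, uh k * (W ω * φ ω k)) * (u₀:ℂ)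
        + ((∑ l, star (uh l) * (W ω * star (φ ω l))) * (u₀:ℂ)
        + ∑ k, ∑ l, uh k * star (uh l) * (W ω * φ ω k * star (φ ω l)))) := by
    intro ω
    have hstar : star ((u₀:ℂ) + ∑ k, uh k * φ ω k)
        = (u₀:ℂ) + ∑ l, star (uh l) * star (φ ω l) := by
      rw [star_add, star_sum]
      congr 1
      · exact Complex.conj_ofReal u₀
      · exact Finset.sum_congr rfl fun l _ => by rw [star_mul']
    rw [hstar]
    set A := ∑ k, uh k * φ ω k with hA
    set B := ∑ l, star (uh l) * star (φ ω l) with hB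
    have h1 : W ω * (((u₀:ℂ) + A) * ((u₀:ℂ) + B))
        = (u₀:ℂ)^2 * W ω + (A * W ω * (u₀:ℂ) + (B * W ω * (u₀:ℂ) + W ω * (A * B))) := by
      ring
    rw [h1]
    congr 1
    congr 1
    · rw [hA, Finset.sum_mul]
      congr 1
      exact Finset.sum_congr rfl fun k _ => by ring
    congr 1
    · rw [hB, Finset.sum_mul]
      congr 1
      exact Finset.sum_congr rfl fun l _ => by ring
    · rw [hA, hB, Finset.sum_mul_sum, Finset.mul_sum]
      refine Finset.sum_congr rfl fun k _ => ?_
      rw [Finset.mul_sum]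
      exact Finset.sum_congr rfl fun l _ => by ring
  have i1 : IntervalIntegrable (fun ω => (u₀:ℂ)^2 * W ω)
      MeasureTheory.volume (-Real.pi) Real.pi := hIntW.const_mul _
  have i2 : IntervalIntegrable (fun ω => (∑ k, uh k * (W ω * φ ω k)) * (u₀:ℂ))
      MeasureTheory.volume (-Real.pi) Real.pi :=
    (intInt_sum (fun (k : Fin ν) ω => uh k * (W ω * φ ω k)) hT2).mul_const _
  have i3 : IntervalIntegrable (fun ω => (∑ l, star (uh l) * (W ω * star (φ ω l))) * (u₀:ℂ))
      MeasureTheory.volume (-Real.pi) Real.pi :=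
    (intInt_sum (fun (l : Fin ν) ω => star (uh l) * (W ω * star (φ ω l))) hT3).mul_const _
  have i4 : IntervalIntegrable
      (fun ω => ∑ k, ∑ l, uh k * star (uh l) * (W ω * φ ω k * star (φ ω l)))
      MeasureTheory.volume (-Real.pi) Real.pi :=
    intInt_sum (fun (k : Fin ν) ω => ∑ l, uh k * star (uh l) * (W ω * φ ω k * star (φ ω l)))
      (fun k => intInt_sum
        (fun (l : Fin ν) ω => uh k * star (uh l) * (W ω * φ ω k * star (φ ω l)))
        (fun l => hT4 k l))
  have e1 : (∫ ω in (-Real.pi)..Real.pi, (u₀:ℂ)^2 * W ω)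
      = (u₀:ℂ)^2 * ∫ ω in (-Real.pi)..Real.pi, W ω := integral_const_mul _ _
  have e2 : (∫ ω in (-Real.pi)..Real.pi, (∑ k, uh k * (W ω * φ ω k)) * (u₀:ℂ))
      = (u₀:ℂ) * (∑ k, uh k * (∫ ω in (-Real.pi)..Real.pi, W ω * φ ω k)) := by
    rw [integral_mul_const, integral_finset_sum (fun k _ => hT2 k)]
    simp only [integral_const_mul]
    ring
  have e3 : (∫ ω in (-Real.pi)..Real.pi, (∑ l, star (uh l) * (W ω * star (φ ω l))) * (u₀:ℂ))
      = (u₀:ℂ) * (∑ l, star (uh l) * (∫ ω in (-Real.pi)..Real.pi, W ω * star (φ ω l))) := by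
    rw [integral_mul_const, integral_finset_sum (fun l _ => hT3 l)]
    simp only [integral_const_mul]
    ring
  have e4 : (∫ ω in (-Real.pi)..Real.pi,
        ∑ k, ∑ l, uh k * star (uh l) * (W ω * φ ω k * star (φ ω l)))
      = ∑ k, ∑ l, uh k * star (uh l) *
          (∫ ω in (-Real.pi)..Real.pi, W ω * φ ω k * star (φ ω l)) := by
    rw [integral_finset_sum (fun k _ => intInt_sum
      (fun (l : Fin ν) ω => uh k * star (uh l) * (W ω * φ ω k * star (φ ω l)))
      (fun l => hT4 k l))]
    refine Finset.sum_congr rfl fun k _ => ?_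
    rw [integral_finset_sum (fun l _ => hT4 k l)]
    exact Finset.sum_congr rfl fun l _ => integral_const_mul _ _
  calc (∫ ω in (-Real.pi)..Real.pi,
        W ω * (((u₀:ℂ) + ∑ k, uh k * φ ω k) * star ((u₀:ℂ) + ∑ k, uh k * φ ω k)))
      = ∫ ω in (-Real.pi)..Real.pi, ((u₀:ℂ)^2 * W ω
        + ((∑ k, uh k * (W ω * φ ω k)) * (u₀:ℂ)
        + ((∑ l, star (uh l) * (W ω * star (φ ω l))) * (u₀:ℂ)
        + ∑ k, ∑ l, uh k * star (uh l) * (W ω * φ ω k * star (φ ω l))))) := by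
        simp only [hpt]
    _ = (∫ ω in (-Real.pi)..Real.pi, (u₀:ℂ)^2 * W ω)
        + ((∫ ω in (-Real.pi)..Real.pi, (∑ k, uh k * (W ω * φ ω k)) * (u₀:ℂ))
        + ((∫ ω in (-Real.pi)..Real.pi, (∑ l, star (uh l) * (W ω * star (φ ω l))) * (u₀:ℂ))
        + ∫ ω in (-Real.pi)..Real.pi,
            ∑ k, ∑ l, uh k * star (uh l) * (W ω * φ ω k * star (φ ω l)))) := by
        rw [integral_add i1 (i2.add (i3.add i4)), integral_add i2 (i3.add i4), integral_add i3 i4]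
    _ = _ := by rw [e1, e2, e3, e4]; ring



lemma interval_integral_conj (f : ℝ → ℂ) (a b : ℝ) :
    (∫ ω in a..b, (starRingEnd ℂ) (f ω)) = (starRingEnd ℂ) (∫ ω in a..b, f ω) := by
  rw [intervalIntegral, intervalIntegral, integral_conj, integral_conj, map_sub]

variable (φ : ℝ → Fin ν → ℂ)
    (hφ : ∀ ω (k : Fin ν), φ ω k = Complex.exp (Complex.I * (((k : ℕ) : ℂ) + 1) * ω))

include hφ

lemma phi_conj : ∀ (ω : ℝ) (k : Fin ν),
    star (φ ω k) = Complex.exp (Complex.I * (-(((k : ℕ) : ℂ) + 1)) * ω) := by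
  intro ω k
  rw [hφ ω k, Complex.star_def, ← Complex.exp_conj]
  congr 1
  simp [Complex.conj_ofReal]
  ring

lemma integral_phi (k : Fin ν) : (∫ ω in (-Real.pi)..Real.pi, φ ω k) = 0 := by
  have h := integral_exp_int (((k:ℕ):ℤ) + 1) (by push_cast; positivity)
  rw [← h]
  congr 1
  funext ω
  rw [hφ ω k]
  push_cast
  ring_nf

lemma integral_phi_conj (k : Fin ν) : (∫ ω in (-Real.pi)..Real.pi, star (φ ω k)) = 0 := by
  have h := integral_exp_int (-(((k:ℕ):ℤ) + 1)) (by
    push_cast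
    intro hcon
    have : (((k:ℕ):ℂ) + 1) = 0 := by linear_combination -hcon
    have h2 : (0:ℂ) < ((k:ℕ):ℂ) + 1 := by positivity
    rw [this] at h2
    exact lt_irrefl 0 h2)
  rw [← h]
  congr 1
  funext ω
  rw [phi_conj φ hφ ω k]
  push_cast
  ring_nf

lemma integral_phi_mul_conj (k l : Fin ν) :
    (∫ ω in (-Real.pi)..Real.pi, φ ω k * star (φ ω l))
      = if k = l then ((2*Real.pi:ℝ):ℂ) else 0 := by
  have hpt : ∀ ω : ℝ, φ ω k * star (φ ω l)
      = Complex.exp (Complex.I * ((((k:ℕ):ℤ) - ((l:ℕ):ℤ) : ℤ) : ℂ) * ω) := by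
    intro ω
    rw [hφ ω k, phi_conj φ hφ ω l, ← Complex.exp_add]
    congr 1
    push_cast
    ring
  simp only [hpt]
  by_cases hkl : k = l
  · subst hkl
    simp only [sub_self, Int.cast_zero, mul_zero, zero_mul, Complex.exp_zero]
    simp
    push_cast
    ring
  · rw [if_neg hkl]
    apply integral_exp_int
    have : ((k:ℕ):ℤ) ≠ ((l:ℕ):ℤ) := by
      simpa [Fin.val_eq_val] using hkl
    intro hcon
    apply this
    have h2 : (((k:ℕ):ℤ) - ((l:ℕ):ℤ)) = 0 := by exact_mod_cast hcon
    omega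

lemma phi_cont (k : Fin ν) : Continuous fun ω => φ ω k := by
  rw [show (fun ω => φ ω k)
    = fun ω : ℝ => Complex.exp (Complex.I * (((k:ℕ):ℂ) + 1) * ω) from funext fun ω => hφ ω k]
  fun_prop

lemma parseval (u₀ : ℝ) (uh : Fin ν → ℂ) :
    (∫ ω in (-Real.pi)..Real.pi, ‖(u₀ : ℂ) + ∑ k, uh k * φ ω k‖ ^ 2)
      = 2 * Real.pi * (u₀^2 + ∑ k, ‖uh k‖^2) := by
  have hre : ∀ (r : ℝ) (z : ℂ), (r:ℂ) * (z * star z) = ((r * ‖z‖^2 : ℝ):ℂ) := by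
    intro r z
    rw [Complex.star_def, Complex.mul_conj']
    push_cast
    ring
  have hE := expand φ (phi_cont φ hφ) (fun _ => (1:ℂ)) continuousOn_const u₀ uh
  simp only [one_mul] at hE
  have hL : (∫ ω in (-Real.pi)..Real.pi,
        (((u₀:ℂ) + ∑ k, uh k * φ ω k) * star ((u₀:ℂ) + ∑ k, uh k * φ ω k)))
      = ((∫ ω in (-Real.pi)..Real.pi, ‖(u₀ : ℂ) + ∑ k, uh k * φ ω k‖ ^ 2 : ℝ) : ℂ) := by
    rw [← intervalIntegral.integral_ofReal]
    congr 1
    funext ω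
    have := hre 1 ((u₀:ℂ) + ∑ k, uh k * φ ω k)
    simpa using this
  rw [hL] at hE
  have h1 : (∫ _ω in (-Real.pi)..Real.pi, (1:ℂ)) = ((2*Real.pi : ℝ):ℂ) := by
    simp
    ring
  rw [h1] at hE
  simp only [integral_phi φ hφ, integral_phi_conj φ hφ, integral_phi_mul_conj φ hφ,
    mul_zero, Finset.sum_const_zero] at hE
  apply Complex.ofReal_inj.mp
  rw [hE]
  push_cast
  simp only [Complex.star_def, mul_ite, mul_zero, Finset.sum_ite_eq, Finset.mem_univ, if_true,
    Complex.mul_conj']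
  rw [← Finset.sum_mul]
  push_cast
  ring

lemma master (M : ℝ → ℝ) (hMc : ContinuousOn M (Set.Icc (-Real.pi) Real.pi))
    (τ₀ : ℝ) (hτ₀ : τ₀ = (1 / (2 * Real.pi)) * ∫ ω in (-Real.pi)..Real.pi, M ω)
    (τ₁ : Fin ν → ℂ)
    (hτ₁ : ∀ k, τ₁ k = ((1 / (2 * Real.pi) : ℝ) : ℂ) *
      ∫ ω in (-Real.pi)..Real.pi, (M ω : ℂ) * φ ω k)
    (τ₂ : Matrix (Fin ν) (Fin ν) ℂ)
    (hτ₂ : ∀ k l, τ₂ k l = ((1 / (2 * Real.pi) : ℝ) : ℂ) *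
      ∫ ω in (-Real.pi)..Real.pi, (M ω : ℂ) * φ ω k * star (φ ω l))
    (u₀ : ℝ) (uh : Fin ν → ℂ) :
    (1 / (2 * Real.pi)) * (∫ ω in (-Real.pi)..Real.pi,
        M ω * ‖(u₀ : ℂ) + ∑ k, uh k * φ ω k‖ ^ 2)
    = τ₀ * u₀^2 + 2 * u₀ * (∑ k, uh k * τ₁ k).re
      + (∑ k, ∑ l, uh k * star (uh l) * τ₂ k l).re := by
  have hπ : (0:ℝ) < Real.pi := Real.pi_pos
  have h2π : (2 * Real.pi) ≠ 0 := by positivity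
  have hMCc : ContinuousOn (fun ω => (M ω : ℂ)) (Set.Icc (-Real.pi) Real.pi) :=
    Complex.continuous_ofReal.comp_continuousOn hMc
  have hE := expand φ (phi_cont φ hφ) (fun ω => (M ω : ℂ)) hMCc u₀ uh
  -- identify LHS with the real integral
  have hL : (∫ ω in (-Real.pi)..Real.pi,
        (M ω : ℂ) * (((u₀:ℂ) + ∑ k, uh k * φ ω k) * star ((u₀:ℂ) + ∑ k, uh k * φ ω k)))
      = ((∫ ω in (-Real.pi)..Real.pi,
          M ω * ‖(u₀ : ℂ) + ∑ k, uh k * φ ω k‖ ^ 2 : ℝ) : ℂ) := by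
    rw [← intervalIntegral.integral_ofReal]
    congr 1
    funext ω
    rw [Complex.star_def, Complex.mul_conj']
    push_cast
    ring
  rw [hL] at hE
  -- identify the four integrals
  have hI0 : (∫ ω in (-Real.pi)..Real.pi, (M ω : ℂ)) = ((2*Real.pi*τ₀ : ℝ):ℂ) := by
    rw [intervalIntegral.integral_ofReal, hτ₀]
    push_cast
    field_simp
  have hI1 : ∀ k, (∫ ω in (-Real.pi)..Real.pi, (M ω : ℂ) * φ ω k)
      = ((2*Real.pi:ℝ):ℂ) * τ₁ k := by
    intro k
    rw [hτ₁ k]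
    push_cast
    rw [← mul_assoc]
    field_simp
  have hI2 : ∀ l, (∫ ω in (-Real.pi)..Real.pi, (M ω : ℂ) * star (φ ω l))
      = ((2*Real.pi:ℝ):ℂ) * star (τ₁ l) := by
    intro l
    have hpt : ∀ ω : ℝ, (M ω : ℂ) * star (φ ω l)
        = (starRingEnd ℂ) ((M ω : ℂ) * φ ω l) := by
      intro ω
      rw [_root_.map_mul, Complex.conj_ofReal]
      rfl
    simp only [hpt]
    rw [interval_integral_conj]
    rw [show (∫ ω in (-Real.pi)..Real.pi, (M ω : ℂ) * φ ω l)
      = ((2*Real.pi:ℝ):ℂ) * τ₁ l from hI1 l]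
    rw [_root_.map_mul, Complex.conj_ofReal]
    rfl
  have hI3 : ∀ k l, (∫ ω in (-Real.pi)..Real.pi, (M ω : ℂ) * φ ω k * star (φ ω l))
      = ((2*Real.pi:ℝ):ℂ) * τ₂ k l := by
    intro k l
    rw [hτ₂ k l]
    push_cast
    rw [← mul_assoc]
    field_simp
  simp only [hI0, hI1, hI2, hI3] at hE
  -- pull out the 2π factors
  have hs1 : (∑ k, uh k * (((2*Real.pi:ℝ):ℂ) * τ₁ k))
      = ((2*Real.pi:ℝ):ℂ) * ∑ k, uh k * τ₁ k := by
    rw [Finset.mul_sum]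
    exact Finset.sum_congr rfl fun k _ => by ring
  have hs2 : (∑ l, star (uh l) * (((2*Real.pi:ℝ):ℂ) * star (τ₁ l)))
      = ((2*Real.pi:ℝ):ℂ) * star (∑ k, uh k * τ₁ k) := by
    rw [star_sum, Finset.mul_sum]
    refine Finset.sum_congr rfl fun k _ => ?_
    rw [star_mul']
    ring
  have hs3 : (∑ k, ∑ l, uh k * star (uh l) * (((2*Real.pi:ℝ):ℂ) * τ₂ k l))
      = ((2*Real.pi:ℝ):ℂ) * ∑ k, ∑ l, uh k * star (uh l) * τ₂ k l := by
    rw [Finset.mul_sum]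
    refine Finset.sum_congr rfl fun k _ => ?_
    rw [Finset.mul_sum]
    exact Finset.sum_congr rfl fun l _ => by ring
  rw [hs1, hs2, hs3] at hE
  -- take real parts
  have hre := congrArg Complex.re hE
  rw [Complex.ofReal_re] at hre
  set D := ∑ k, uh k * τ₁ k with hD
  set Q := ∑ k, ∑ l, uh k * star (uh l) * τ₂ k l with hQ
  have hrhs : ((u₀:ℂ) ^ 2 * ((2*Real.pi*τ₀ : ℝ):ℂ)
      + (u₀:ℂ) * (((2*Real.pi:ℝ):ℂ) * D)
      + (u₀:ℂ) * (((2*Real.pi:ℝ):ℂ) * star D)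
      + ((2*Real.pi:ℝ):ℂ) * Q).re
      = 2*Real.pi*(τ₀*u₀^2 + 2*u₀*D.re + Q.re) := by
    simp [← Complex.ofReal_pow, Complex.add_re, Complex.mul_re, Complex.ofReal_re,
      Complex.ofReal_im, Complex.conj_re, Complex.conj_im]
    ring
  rw [hrhs] at hre
  rw [hre]
  field_simp
  try ring


end GMIAux

/-- Theorem 3 of the paper. Maximization of the asymptotic GMI over
causal degree-`ν` spectral factors `U(ω) = u₀ + Σ_{k=1}^{ν} uh_k e^{ikω}`, for a continuous
negative spectrum `M` on `[-π, π]`. -/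
theorem isi_asymptotic_gmi_max (ν : ℕ) (hν : 1 ≤ ν)
    (M : ℝ → ℝ) (hMc : ContinuousOn M (Set.Icc (-Real.pi) Real.pi))
    (hMneg : ∀ ω ∈ Set.Icc (-Real.pi) Real.pi, M ω < 0)
    (φ : ℝ → Fin ν → ℂ)
    (hφ : ∀ ω (k : Fin ν), φ ω k = Complex.exp (Complex.I * (((k : ℕ) : ℂ) + 1) * ω))
    (τ₀ : ℝ) (hτ₀ : τ₀ = (1 / (2 * Real.pi)) * ∫ ω in (-Real.pi)..Real.pi, M ω)
    (τ₁ : Fin ν → ℂ)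
    (hτ₁ : ∀ k, τ₁ k = ((1 / (2 * Real.pi) : ℝ) : ℂ) *
      ∫ ω in (-Real.pi)..Real.pi, (M ω : ℂ) * φ ω k)
    (τ₂ : Matrix (Fin ν) (Fin ν) ℂ)
    (hτ₂ : ∀ k l, τ₂ k l = ((1 / (2 * Real.pi) : ℝ) : ℂ) *
      ∫ ω in (-Real.pi)..Real.pi, (M ω : ℂ) * φ ω k * star (φ ω l))
    (u₀s : ℝ)
    (hu₀s : u₀s = ((star τ₁ ⬝ᵥ τ₂⁻¹ *ᵥ τ₁).re - τ₀) ^ (-(1 / 2 : ℝ)))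
    (uhs : Fin ν → ℂ)
    (huhs : ∀ k, uhs k = -(u₀s : ℂ) * (star τ₁ ᵥ* τ₂⁻¹) k)
    (J : ℝ → (Fin ν → ℂ) → ℝ)
    (hJ : ∀ (u₀ : ℝ) (uh : Fin ν → ℂ), J u₀ uh = 1 + 2 * Real.log u₀
      + (1 / (2 * Real.pi)) * ∫ ω in (-Real.pi)..Real.pi,
          M ω * ‖(u₀ : ℂ) + ∑ k, uh k * φ ω k‖ ^ 2) :
    ((-τ₂).PosDef ∧ 0 < (star τ₁ ⬝ᵥ τ₂⁻¹ *ᵥ τ₁).re - τ₀) ∧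
      (∀ u₀ : ℝ, 0 < u₀ → ∀ uh : Fin ν → ℂ, J u₀ uh ≤ J u₀s uhs) ∧
      J u₀s uhs = 2 * Real.log u₀s := by
  have hπ : (0:ℝ) < Real.pi := Real.pi_pos
  have h2π : (0:ℝ) < 1 / (2 * Real.pi) := by positivity
  have hφc := GMIAux.phi_cont φ hφ
  have hmaster := GMIAux.master φ hφ M hMc τ₀ hτ₀ τ₁ hτ₁ τ₂ hτ₂
  -- bridging sums to dot products
  have Qbridge : ∀ uh : Fin ν → ℂ, (∑ k, ∑ l, uh k * star (uh l) * τ₂ k l)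
      = star (star uh) ⬝ᵥ τ₂ *ᵥ (star uh) := by
    intro uh
    simp only [dotProduct, mulVec, Pi.star_apply, star_star]
    refine Finset.sum_congr rfl fun k _ => ?_
    rw [Finset.mul_sum]
    exact Finset.sum_congr rfl fun l _ => by ring
  have Dbridge : ∀ uh : Fin ν → ℂ, (∑ k, uh k * τ₁ k) = star (star uh) ⬝ᵥ τ₁ := by
    intro uh
    simp only [dotProduct, Pi.star_apply, star_star]
  -- strict negativity of the weighted integral
  have hnegI : ∀ (u₀ : ℝ) (uh : Fin ν → ℂ), (u₀ ≠ 0 ∨ uh ≠ 0) →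
      (∫ ω in (-Real.pi)..Real.pi, M ω * ‖(u₀ : ℂ) + ∑ k, uh k * φ ω k‖ ^ 2) < 0 := by
    intro u₀ uh h
    have hSc : Continuous fun ω => (u₀:ℂ) + ∑ k, uh k * φ ω k :=
      continuous_const.add (continuous_finset_sum _ fun k _ => continuous_const.mul (hφc k))
    have hex : ∃ ω₀ ∈ Set.Icc (-Real.pi) Real.pi,
        (u₀:ℂ) + ∑ k, uh k * φ ω₀ k ≠ 0 := by
      by_contra hcon
      push_neg at hcon
      have hzero : (∫ ω in (-Real.pi)..Real.pi, ‖(u₀ : ℂ) + ∑ k, uh k * φ ω k‖ ^ 2) = 0 := by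
        rw [show (∫ ω in (-Real.pi)..Real.pi, ‖(u₀ : ℂ) + ∑ k, uh k * φ ω k‖ ^ 2)
            = ∫ _ω in (-Real.pi)..Real.pi, (0:ℝ) from
          intervalIntegral.integral_congr fun ω hω => by
            rw [hcon ω (by rwa [Set.uIcc_of_le (by linarith)] at hω)]
            simp]
        simp
      rw [GMIAux.parseval φ hφ u₀ uh] at hzero
      have hpos : 0 < u₀^2 + ∑ k, ‖uh k‖^2 := by
        rcases h with h | h
        · have : 0 < u₀^2 := by positivity
          have : 0 ≤ ∑ k, ‖uh k‖^2 := Finset.sum_nonneg fun k _ => by positivity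
          linarith
        · obtain ⟨k, hk⟩ := Function.ne_iff.mp h
          have h1 : 0 < ‖uh k‖^2 := pow_pos (norm_pos_iff.mpr hk) 2
          have h2 : ‖uh k‖^2 ≤ ∑ j, ‖uh j‖^2 :=
            Finset.single_le_sum (f := fun j => ‖uh j‖^2) (fun j _ => sq_nonneg _)
              (Finset.mem_univ k)
          have : 0 ≤ u₀^2 := sq_nonneg u₀
          linarith
      nlinarith [hzero, hpos, hπ]
    obtain ⟨ω₀, hω₀, hS₀⟩ := hex
    have hpos := intervalIntegral.integral_pos (f := fun ω =>
        -(M ω * ‖(u₀ : ℂ) + ∑ k, uh k * φ ω k‖ ^ 2)) (by linarith : -Real.pi < Real.pi)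
      (hMc.mul ((hSc.norm.pow 2).continuousOn)).neg
      (fun x hx => by
        have hM := hMneg x (Set.Ioc_subset_Icc_self hx)
        have hn : 0 ≤ ‖(u₀ : ℂ) + ∑ k, uh k * φ x k‖ ^ 2 := by positivity
        show (0:ℝ) ≤ -(M x * ‖(u₀ : ℂ) + ∑ k, uh k * φ x k‖ ^ 2)
        nlinarith)
      ⟨ω₀, hω₀, by
        have hM := hMneg ω₀ hω₀
        have hn : 0 < ‖(u₀ : ℂ) + ∑ k, uh k * φ ω₀ k‖ ^ 2 :=
          pow_pos (norm_pos_iff.mpr hS₀) 2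
        show (0:ℝ) < -(M ω₀ * ‖(u₀ : ℂ) + ∑ k, uh k * φ ω₀ k‖ ^ 2)
        nlinarith⟩
    rw [intervalIntegral.integral_neg] at hpos
    linarith
  -- Hermitian
  have hherm : τ₂.IsHermitian := by
    apply Matrix.ext
    intro k l
    rw [Matrix.conjTranspose_apply, hτ₂ l k, hτ₂ k l]
    have hpt : ∀ ω : ℝ, (starRingEnd ℂ) ((M ω : ℂ) * φ ω l * star (φ ω k))
        = (M ω : ℂ) * φ ω k * star (φ ω l) := by
      intro ω
      simp only [_root_.map_mul, Complex.conj_ofReal, Complex.star_def, Complex.conj_conj]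
      ring
    calc star (((1 / (2 * Real.pi) : ℝ) : ℂ) *
          ∫ ω in (-Real.pi)..Real.pi, (M ω : ℂ) * φ ω l * star (φ ω k))
        = ((1 / (2 * Real.pi) : ℝ) : ℂ) * (starRingEnd ℂ)
            (∫ ω in (-Real.pi)..Real.pi, (M ω : ℂ) * φ ω l * star (φ ω k)) := by
          rw [Complex.star_def, _root_.map_mul, Complex.conj_ofReal]
      _ = ((1 / (2 * Real.pi) : ℝ) : ℂ) *
            ∫ ω in (-Real.pi)..Real.pi, (M ω : ℂ) * φ ω k * star (φ ω l) := by
          rw [← GMIAux.interval_integral_conj]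
          congr 1
          exact intervalIntegral.integral_congr fun ω _ => hpt ω
  -- negative definiteness of the quadratic form
  have negdefre : ∀ x : Fin ν → ℂ, x ≠ 0 → (star x ⬝ᵥ τ₂ *ᵥ x).re < 0 := by
    intro x hx
    have h := hmaster 0 (star x)
    rw [Qbridge (star x)] at h
    simp only [star_star] at h
    have hL : (∫ ω in (-Real.pi)..Real.pi,
        M ω * ‖((0:ℝ) : ℂ) + ∑ k, (star x) k * φ ω k‖ ^ 2) < 0 :=
      hnegI 0 (star x) (Or.inr (fun hc => hx (by
        have := congrArg star hc
        simpa [star_star] using this)))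
    nlinarith [h, hL, h2π]
  have him : ∀ x : Fin ν → ℂ, (star x ⬝ᵥ τ₂ *ᵥ x).im = 0 := by
    intro x
    have h1 : star x ⬝ᵥ (τ₂ *ᵥ x) = star (star (τ₂ *ᵥ x) ⬝ᵥ x) := star_dotProduct _ _
    have h2 : star (star x ⬝ᵥ τ₂ *ᵥ x) = star x ⬝ᵥ τ₂ *ᵥ x := by
      conv_lhs => rw [h1, star_star, Matrix.star_mulVec]
      rw [hherm.eq, ← Matrix.dotProduct_mulVec]
    apply Complex.conj_eq_iff_im.mp
    rw [← Complex.star_def]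
    exact h2
  have hposdef : (-τ₂).PosDef := by
    refine Matrix.PosDef.of_dotProduct_mulVec_pos hherm.neg fun x hx => ?_
    rw [Matrix.neg_mulVec, dotProduct_neg, Complex.lt_def]
    constructor
    · simpa using negdefre x hx
    · simpa using him x
  have hdet : IsUnit τ₂.det := by
    rw [isUnit_iff_ne_zero]
    intro h0
    obtain ⟨v, hv0, hv⟩ := (Matrix.exists_mulVec_eq_zero_iff).mpr h0
    have := negdefre v hv0
    rw [hv, dotProduct_zero] at this
    simp at this
  -- complete the square
  set c' : ℂ := star τ₁ ⬝ᵥ τ₂⁻¹ *ᵥ τ₁ with hc'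
  set c : ℝ := c'.re - τ₀ with hc
  have hinv : τ₂⁻¹.IsHermitian := hherm.inv
  have hz : τ₂ *ᵥ (τ₂⁻¹ *ᵥ τ₁) = τ₁ := by
    rw [Matrix.mulVec_mulVec, Matrix.mul_nonsing_inv _ hdet, Matrix.one_mulVec]
  have hstarz : star (τ₂⁻¹ *ᵥ τ₁) = star τ₁ ᵥ* τ₂⁻¹ := by
    rw [Matrix.star_mulVec, hinv.eq]
  have hdotz : ∀ v : Fin ν → ℂ, star (τ₂⁻¹ *ᵥ τ₁) ⬝ᵥ (τ₂ *ᵥ v) = star τ₁ ⬝ᵥ v := by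
    intro v
    rw [hstarz, Matrix.dotProduct_mulVec, Matrix.vecMul_vecMul,
      Matrix.nonsing_inv_mul _ hdet, Matrix.vecMul_one]
  have hdotz2 : star (τ₂⁻¹ *ᵥ τ₁) ⬝ᵥ τ₁ = c' := by
    rw [hstarz, ← Matrix.dotProduct_mulVec]
  have hstarD : ∀ v : Fin ν → ℂ, star (star v ⬝ᵥ τ₁) = star τ₁ ⬝ᵥ v := by
    intro v
    rw [star_dotProduct, star_star]
  have hsq : ∀ (u₀ : ℝ) (v : Fin ν → ℂ),
      star (v + (u₀:ℂ) • (τ₂⁻¹ *ᵥ τ₁)) ⬝ᵥ τ₂ *ᵥ (v + (u₀:ℂ) • (τ₂⁻¹ *ᵥ τ₁))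
      = star v ⬝ᵥ τ₂ *ᵥ v + (u₀:ℂ) * (star v ⬝ᵥ τ₁)
        + (u₀:ℂ) * star (star v ⬝ᵥ τ₁) + ((u₀:ℂ))^2 * c' := by
    intro u₀ v
    rw [star_add, star_smul, Matrix.mulVec_add, Matrix.mulVec_smul, hz]
    rw [add_dotProduct, dotProduct_add, dotProduct_add]
    rw [dotProduct_smul, smul_dotProduct, smul_dotProduct, dotProduct_smul]
    rw [hdotz v, hdotz2, hstarD v]
    have hsu : star ((u₀:ℂ)) = (u₀:ℂ) := Complex.conj_ofReal u₀
    rw [hsu]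
    simp only [smul_eq_mul]
    ring
  -- key formula for J
  have hkeyJ : ∀ (u₀ : ℝ) (uh : Fin ν → ℂ),
      J u₀ uh = 1 + 2 * Real.log u₀
        + (star (star uh + (u₀:ℂ) • (τ₂⁻¹ *ᵥ τ₁)) ⬝ᵥ
            τ₂ *ᵥ (star uh + (u₀:ℂ) • (τ₂⁻¹ *ᵥ τ₁))).re - c * u₀^2 := by
    intro u₀ uh
    rw [hJ, hmaster, Dbridge uh, Qbridge uh]
    have h := congrArg Complex.re (hsq u₀ (star uh))
    have hre2 : ∀ z : ℂ, ((u₀:ℂ) * z).re = u₀ * z.re := fun z => by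
      simp [Complex.mul_re]
    have hre3 : (((u₀:ℂ))^2 * c').re = u₀^2 * c'.re := by
      rw [← Complex.ofReal_pow, Complex.re_ofReal_mul]
    have hre4 : (star (star (star uh) ⬝ᵥ τ₁)).re = (star (star uh) ⬝ᵥ τ₁).re := by
      rw [Complex.star_def]
      exact Complex.conj_re _
    simp only [Complex.add_re, hre2, hre3, hre4] at h
    rw [hc]
    linarith [h]
  -- positivity of c
  have hcpos : 0 < c := by
    set uh₀ : Fin ν → ℂ := fun k => -((star τ₁ ᵥ* τ₂⁻¹) k) with huh₀
    have hw0 : star uh₀ + ((1:ℝ):ℂ) • (τ₂⁻¹ *ᵥ τ₁) = 0 := by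
      funext k
      have : star (star τ₁ ᵥ* τ₂⁻¹) = τ₂⁻¹ *ᵥ τ₁ := by
        rw [Matrix.star_vecMul, hinv.eq, star_star]
      simp only [Pi.add_apply, Pi.star_apply, huh₀, star_neg, Pi.smul_apply,
        Complex.ofReal_one, one_smul, Pi.zero_apply]
      rw [show star ((star τ₁ ᵥ* τ₂⁻¹) k) = (star (star τ₁ ᵥ* τ₂⁻¹)) k from rfl, this]
      ring
    have h1 := hkeyJ 1 uh₀
    rw [hw0] at h1
    simp only [Matrix.mulVec_zero, dotProduct_zero, Complex.zero_re,
      Real.log_one, one_pow] at h1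
    have h2 := hJ 1 uh₀
    have h3 := hnegI 1 uh₀ (Or.inl one_ne_zero)
    rw [h1] at h2
    simp only [Real.log_one] at h2
    nlinarith [h2π, h3, h2]
  -- properties of u₀s
  have hu₀s_pos : 0 < u₀s := by
    rw [hu₀s]
    exact Real.rpow_pos_of_pos hcpos _
  have hsq2 : u₀s^2 = c⁻¹ := by
    rw [hu₀s, ← Real.rpow_natCast (c ^ (-(1/2:ℝ))) 2, ← Real.rpow_mul hcpos.le]
    norm_num
    exact Real.rpow_neg_one c
  have hcu : c * u₀s^2 = 1 := by
    rw [hsq2]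
    field_simp
  have hlogs : Real.log u₀s = -(1/2) * Real.log c := by
    rw [hu₀s, Real.log_rpow hcpos]
    try ring
  -- w = 0 at the optimum
  have hw0s : star uhs + (u₀s:ℂ) • (τ₂⁻¹ *ᵥ τ₁) = 0 := by
    funext k
    have hsv : star (star τ₁ ᵥ* τ₂⁻¹) = τ₂⁻¹ *ᵥ τ₁ := by
      rw [Matrix.star_vecMul, hinv.eq, star_star]
    simp only [Pi.add_apply, Pi.star_apply, Pi.smul_apply, Pi.zero_apply]
    rw [huhs k, star_mul']
    rw [show star ((star τ₁ ᵥ* τ₂⁻¹) k) = (star (star τ₁ ᵥ* τ₂⁻¹)) k from rfl, hsv]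
    rw [show star (-(u₀s:ℂ)) = -(u₀s:ℂ) by rw [star_neg]; rw [Complex.star_def, Complex.conj_ofReal]]
    simp only [smul_eq_mul]
    ring
  have hJs : J u₀s uhs = 2 * Real.log u₀s := by
    rw [hkeyJ u₀s uhs, hw0s]
    simp only [Matrix.mulVec_zero, dotProduct_zero, Complex.zero_re]
    linarith [hcu]
  refine ⟨⟨hposdef, hcpos⟩, ?_, hJs⟩
  intro u₀ hu₀ uh
  rw [hJs, hkeyJ u₀ uh]
  have hQw : (star (star uh + (u₀:ℂ) • (τ₂⁻¹ *ᵥ τ₁)) ⬝ᵥ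
      τ₂ *ᵥ (star uh + (u₀:ℂ) • (τ₂⁻¹ *ᵥ τ₁))).re ≤ 0 := by
    by_cases hw : star uh + (u₀:ℂ) • (τ₂⁻¹ *ᵥ τ₁) = 0
    · rw [hw]
      simp
    · exact (negdefre _ hw).le
  have hlog2 : Real.log (c * u₀^2) ≤ c * u₀^2 - 1 :=
    Real.log_le_sub_one_of_pos (by positivity)
  rw [Real.log_mul (ne_of_gt hcpos) (by positivity), Real.log_pow] at hlog2
  push_cast at hlog2
  nlinarith [hQw, hlog2, hlogs]
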